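/- arXiv:0810.1691 — 5 statements merged into one kernel-verified Lean document; each statement's English description precedes it below -/
import Mathlib

section
/- Let L/K be a quadratic extension of number fields with nontrivial automorphism σ, and let E_K, E_L be the unit groups of their rings of integers. Then the natural map E_K/E_K³ → (E_L/E_L³)^σ is an isomorphism. -/
open NumberField

/-- For a quadratic extension L/K of number fields with nontrivial automorphism σ,
the natural map E_K/E_K³ → (E_L/E_L³)^σ on unit groups of rings of integers is an
isomorphism: injective (a unit of K that is the cube of a unit of L is the cube of a
unit of K) and surjective onto σ-fixed classes. -/
theorem stmt_2 (K L : Type*) [Field K] [Field L] [NumberField K] [NumberField L]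
    [Algebra K L] [IsGalois K L] (h2 : Module.finrank K L = 2)
    (σ : L ≃ₐ[K] L) (hσ : σ ≠ 1) :
    (∀ u : (𝓞 K)ˣ, (∃ w : (𝓞 L)ˣ,
        algebraMap (𝓞 L) L ((w : 𝓞 L) ^ 3) = algebraMap K L (algebraMap (𝓞 K) K (u : 𝓞 K))) →
      ∃ v : (𝓞 K)ˣ, v ^ 3 = u) ∧
    (∀ w : (𝓞 L)ˣ, (∃ c : (𝓞 L)ˣ,
        σ (algebraMap (𝓞 L) L (w : 𝓞 L)) = algebraMap (𝓞 L) L ((w : 𝓞 L) * (c : 𝓞 L) ^ 3)) →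
      ∃ u : (𝓞 K)ˣ, ∃ c : (𝓞 L)ˣ,
        algebraMap K L (algebraMap (𝓞 K) K (u : 𝓞 K))
          = algebraMap (𝓞 L) L ((w : 𝓞 L) * (c : 𝓞 L) ^ 3)) := by
  classical
  have hfd : FiniteDimensional K L := by
    have : 0 < Module.finrank K L := by omega
    exact Module.finite_of_finrank_pos this
  have hcard : Fintype.card (L ≃ₐ[K] L) = 2 := by
    rw [← Nat.card_eq_fintype_card, IsGalois.card_aut_eq_finrank, h2]
  -- every automorphism is 1 or σ
  have htau : ∀ τ : L ≃ₐ[K] L, τ = 1 ∨ τ = σ := by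
    intro τ
    by_contra h
    push_neg at h
    have h1σ : (1 : L ≃ₐ[K] L) ≠ σ := fun hh => hσ hh.symm
    have hc3 : ({1, σ, τ} : Finset (L ≃ₐ[K] L)).card = 3 := by
      rw [Finset.card_insert_of_notMem (by simp [h1σ, Ne.symm h.1]),
        Finset.card_insert_of_notMem (by simp [Ne.symm h.2])]
      simp
    have := Finset.card_le_univ ({1, σ, τ} : Finset (L ≃ₐ[K] L))
    rw [hc3, hcard] at this
    omega
  have hσσ : ∀ x : L, σ (σ x) = x := by
    intro x
    have hss : σ * σ = 1 := by
      rcases htau (σ * σ) with h | h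
      · exact h
      · exact absurd (mul_left_cancel (a := σ) (b := σ) (c := 1) (by simpa using h)) hσ
    have := DFunLike.congr_fun hss x
    simpa using this
  -- σ-fixed elements come from K
  have hfix : ∀ x : L, σ x = x → ∃ k : K, algebraMap K L k = x := by
    intro x hx
    have hmem : x ∈ IntermediateField.fixedField (⊤ : Subgroup (L ≃ₐ[K] L)) := by
      rintro ⟨τ, -⟩
      rcases htau τ with h | h <;> simp [h, hx]
    have hbot : IntermediateField.fixedField (⊤ : Subgroup (L ≃ₐ[K] L)) = ⊥ :=
      OrderIso.map_bot (IsGalois.intermediateFieldEquivSubgroup (F := K) (E := L)).symm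
    rw [hbot, IntermediateField.mem_bot] at hmem
    exact hmem
  -- σ-fixed units of 𝓞 L come from units of 𝓞 K
  have hA : ∀ x x' : L, IsIntegral ℤ x → IsIntegral ℤ x' → x * x' = 1 → σ x = x →
      ∃ b : (𝓞 K)ˣ, algebraMap K L (algebraMap (𝓞 K) K (b : 𝓞 K)) = x := by
    intro x x' hix hix' hxx' hfx
    have hx'fix : σ x' = x' := by
      have h1 : x * σ x' = 1 := by
        rw [← hfx, ← map_mul, hxx', map_one]
      have hx0 : x ≠ 0 := left_ne_zero_of_mul_eq_one hxx'
      exact mul_left_cancel₀ hx0 (h1.trans hxx'.symm)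
    obtain ⟨k, hk⟩ := hfix x hfx
    obtain ⟨k', hk'⟩ := hfix x' hx'fix
    have hinj : Function.Injective (algebraMap K L) := (algebraMap K L).injective
    have hik : IsIntegral ℤ k :=
      (isIntegral_algebraMap_iff hinj).mp (by rw [hk]; exact hix)
    have hik' : IsIntegral ℤ k' :=
      (isIntegral_algebraMap_iff hinj).mp (by rw [hk']; exact hix')
    have hkk' : k * k' = 1 := by
      apply hinj
      rw [map_mul, map_one, hk, hk', hxx']
    refine ⟨⟨⟨k, hik⟩, ⟨k', hik'⟩, ?_, ?_⟩, ?_⟩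
    · ext; exact hkk'
    · ext; exact (mul_comm k' k).trans hkk'
    · exact hk
  have hint : ∀ z : 𝓞 L, IsIntegral ℤ (algebraMap (𝓞 L) L z) := fun z =>
    RingOfIntegers.isIntegral_coe z
  have hσint : ∀ x : L, IsIntegral ℤ x → IsIntegral ℤ (σ x) := by
    intro x hx
    exact IsIntegral.map (σ : L →ₐ[K] L).toRingHom.toIntAlgHom hx
  constructor
  · -- injectivity
    rintro u ⟨w, hw⟩
    set W : L := algebraMap (𝓞 L) L (w : 𝓞 L) with hWdef
    set U : L := algebraMap K L (algebraMap (𝓞 K) K (u : 𝓞 K)) with hUdef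
    have hW3 : W ^ 3 = U := by rw [hWdef, ← map_pow]; exact hw
    have hUfix : σ U = U := by rw [hUdef]; exact σ.commutes _
    have hWinv : W * algebraMap (𝓞 L) L ((w⁻¹ : (𝓞 L)ˣ) : 𝓞 L) = 1 := by
      rw [hWdef, ← map_mul, Units.mul_inv, map_one]
    set W' : L := algebraMap (𝓞 L) L ((w⁻¹ : (𝓞 L)ˣ) : 𝓞 L) with hW'def
    have ha_fix : σ (W * σ W) = W * σ W := by
      rw [map_mul, hσσ, mul_comm]
    have ha_int : IsIntegral ℤ (W * σ W) := (hint _).mul (hσint _ (hint _))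
    have ha_int' : IsIntegral ℤ (W' * σ W') := (hint _).mul (hσint _ (hint _))
    have ha_inv : (W * σ W) * (W' * σ W') = 1 := by
      have h1 : σ W * σ W' = 1 := by rw [← map_mul, hWinv, map_one]
      calc (W * σ W) * (W' * σ W') = (W * W') * (σ W * σ W') := by ring
        _ = 1 := by rw [hWinv, h1, one_mul]
    obtain ⟨b, hb⟩ := hA (W * σ W) (W' * σ W') ha_int ha_int' ha_inv ha_fix
    -- b^3 = u^2 in (𝓞 K)ˣ
    have hb3 : (b : (𝓞 K)ˣ) ^ 3 = u ^ 2 := by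
      have hinj2 : Function.Injective
          (fun z : 𝓞 K => algebraMap K L (algebraMap (𝓞 K) K z)) := by
        intro a b h
        exact RingOfIntegers.ext ((algebraMap K L).injective h)
      have hσW3 : (σ W) ^ 3 = U := by rw [← map_pow, hW3, hUfix]
      have key : algebraMap K L (algebraMap (𝓞 K) K (((b ^ 3 : (𝓞 K)ˣ)) : 𝓞 K))
          = algebraMap K L (algebraMap (𝓞 K) K ((u ^ 2 : (𝓞 K)ˣ) : 𝓞 K)) := by
        rw [Units.val_pow_eq_pow_val, Units.val_pow_eq_pow_val,
          map_pow, map_pow, map_pow, map_pow, hb, mul_pow, hW3, hσW3, ← hUdef]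
        ring
      exact Units.ext (hinj2 key)
    refine ⟨b ^ 2 * u⁻¹, ?_⟩
    have hexp : (b ^ 2 * u⁻¹) ^ 3 = (b ^ 3) ^ 2 * (u⁻¹) ^ 3 := by
      rw [mul_pow, ← pow_mul, ← pow_mul]
    rw [hexp, hb3]
    group
  · -- surjectivity
    rintro w ⟨c, hc⟩
    set W : L := algebraMap (𝓞 L) L (w : 𝓞 L) with hWdef
    set C : L := algebraMap (𝓞 L) L (c : 𝓞 L) with hCdef
    have hσW : σ W = W * C ^ 3 := by
      rw [hWdef, hCdef, ← map_pow, ← map_mul]; exact hc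
    have hWinv : W * algebraMap (𝓞 L) L ((w⁻¹ : (𝓞 L)ˣ) : 𝓞 L) = 1 := by
      rw [hWdef, ← map_mul, Units.mul_inv, map_one]
    set W' : L := algebraMap (𝓞 L) L ((w⁻¹ : (𝓞 L)ˣ) : 𝓞 L) with hW'def
    have ha_fix : σ (W * σ W) = W * σ W := by rw [map_mul, hσσ, mul_comm]
    have ha_int : IsIntegral ℤ (W * σ W) := (hint _).mul (hσint _ (hint _))
    have ha_int' : IsIntegral ℤ (W' * σ W') := (hint _).mul (hσint _ (hint _))
    have ha_inv : (W * σ W) * (W' * σ W') = 1 := by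
      have h1 : σ W * σ W' = 1 := by rw [← map_mul, hWinv, map_one]
      calc (W * σ W) * (W' * σ W') = (W * W') * (σ W * σ W') := by ring
        _ = 1 := by rw [hWinv, h1, one_mul]
    obtain ⟨b, hb⟩ := hA (W * σ W) (W' * σ W') ha_int ha_int' ha_inv ha_fix
    refine ⟨b ^ 2, w * c ^ 2, ?_⟩
    simp only [Units.val_pow_eq_pow_val, Units.val_mul, map_pow, map_mul]
    rw [hb, hσW, ← hWdef, ← hCdef]
    ring
end

section
/- Let K₁/K₀ be a Galois extension of fields of characteristic 0 such that K₁ contains no primitive cube root of unity. Then the natural map K₀×/(K₀×)³ → K₁×/(K₁×)³ is injective. -/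
/-- If K₁/K₀ is a Galois extension of characteristic-zero fields and K₁ contains no
primitive cube root of unity, then the map K₀×/(K₀×)³ → K₁×/(K₁×)³ is injective:
an element of K₀× that is a cube in K₁ is already a cube in K₀. -/
theorem stmt_3 (K₀ K₁ : Type*) [Field K₀] [Field K₁] [CharZero K₀] [Algebra K₀ K₁]
    [IsGalois K₀ K₁] (hζ : ∀ z : K₁, z ^ 2 + z + 1 ≠ 0)
    (b : K₀) (hb : b ≠ 0) (y : K₁) (hy : y ^ 3 = algebraMap K₀ K₁ b) :
    ∃ z : K₀, z ^ 3 = b := by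
  classical
  -- cube roots of unity in K₁ are trivial
  have hcube : ∀ t : K₁, t ^ 3 = 1 → t = 1 := by
    intro t ht
    have h : (t - 1) * (t ^ 2 + t + 1) = 0 := by linear_combination ht
    rcases mul_eq_zero.mp h with h1 | h2
    · exact sub_eq_zero.mp h1
    · exact absurd h2 (hζ t)
  have hy0 : y ≠ 0 := by
    intro h
    apply hb
    have : algebraMap K₀ K₁ b = 0 := by rw [← hy, h]; ring
    exact (map_eq_zero _).mp this
  -- y is a root of X^3 - C b
  set p : Polynomial K₀ := Polynomial.X ^ 3 - Polynomial.C b with hp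
  have hpy : Polynomial.aeval y p = 0 := by
    simp [hp, hy]
  have hp0 : p ≠ 0 := by
    have : p.natDegree = 3 := by
      rw [hp]
      compute_degree!
    intro h
    simp [h] at this
  have hint : IsIntegral K₀ y := by
    refine ⟨p, ?_, ?_⟩
    · rw [hp]
      apply Polynomial.monic_X_pow_sub_C _ (by norm_num)
    · simpa [Polynomial.eval₂_eq_eval_map, ← Polynomial.aeval_def] using hpy
  -- any root of minpoly in K₁ equals y
  have hroot : ∀ r : K₁, Polynomial.aeval r (minpoly K₀ y) = 0 → r = y := by
    intro r hr
    have hdvd : minpoly K₀ y ∣ p := minpoly.dvd _ _ hpy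
    obtain ⟨q, hq⟩ := hdvd
    have hrp : Polynomial.aeval r p = 0 := by
      rw [hq, map_mul, hr, zero_mul]
    have hr3 : r ^ 3 = algebraMap K₀ K₁ b := by
      have := hrp
      simp [hp] at this
      exact sub_eq_zero.mp this
    have hby : algebraMap K₀ K₁ b ≠ 0 := by
      rw [← hy]; exact pow_ne_zero _ hy0
    have : (r * y⁻¹) ^ 3 = 1 := by
      rw [mul_pow, hr3, inv_pow, hy]
      exact mul_inv_cancel₀ hby
    have := hcube _ this
    field_simp at this
    exact this
  -- the minpoly splits in K₁ with distinct roots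
  have hsep : (minpoly K₀ y).Separable := (IsGalois.to_isSeparable).isSeparable' y
  have hsplits : ((minpoly K₀ y).map (algebraMap K₀ K₁)).Splits :=
    (IsGalois.to_normal).splits y
  set q : Polynomial K₁ := (minpoly K₀ y).map (algebraMap K₀ K₁) with hqdef
  have hq0 : q ≠ 0 :=
    Polynomial.map_ne_zero (minpoly.ne_zero hint)
  have hnodup : q.roots.Nodup := Polynomial.nodup_roots (hsep.map)
  have hcard : (minpoly K₀ y).natDegree = Multiset.card q.roots :=
    ((Polynomial.natDegree_map _).symm.trans hsplits.natDegree_eq_card_roots)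
  have hmemroots : ∀ r ∈ q.roots, r = y := by
    intro r hr
    apply hroot
    have := Polynomial.isRoot_of_mem_roots hr
    rwa [Polynomial.IsRoot, Polynomial.eval_map, ← Polynomial.aeval_def] at this
  have hyroot : y ∈ q.roots := by
    rw [Polynomial.mem_roots hq0]
    rw [Polynomial.IsRoot, Polynomial.eval_map, ← Polynomial.aeval_def]
    exact minpoly.aeval _ _
  have hcard1 : Multiset.card q.roots = 1 := by
    have hle : Multiset.card q.roots ≤ 1 := by
      have hsub : q.roots.toFinset ⊆ {y} := by
        intro r hr
        simp only [Finset.mem_singleton]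
        exact hmemroots r (Multiset.mem_toFinset.mp hr)
      calc Multiset.card q.roots = q.roots.toFinset.card :=
            (Multiset.toFinset_card_of_nodup hnodup).symm
        _ ≤ ({y} : Finset K₁).card := Finset.card_le_card hsub
        _ = 1 := Finset.card_singleton y
    have hge : 1 ≤ Multiset.card q.roots := Multiset.card_pos_iff_exists_mem.mpr ⟨y, hyroot⟩
    omega
  have hdeg : (minpoly K₀ y).degree = 1 := by
    rw [Polynomial.degree_eq_natDegree (minpoly.ne_zero hint), hcard, hcard1]
    rfl
  obtain ⟨z, hz⟩ := (minpoly.degree_eq_one_iff).mp hdeg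
  refine ⟨z, ?_⟩
  have : algebraMap K₀ K₁ (z ^ 3) = algebraMap K₀ K₁ b := by
    rw [map_pow, hz, hy]
  exact (algebraMap K₀ K₁).injective this
end

section
/- Let p be a prime and N₁/N₀ a Galois extension of fields of characteristic ≠ p whose Galois group contains an element τ of order p. Let ε ∈ N₁× with N₁(ζ_p, ε^{1/p})/N₀ Galois. Then ε^{τ−1} = β^p for some β ∈ N₁, and τ extends to an element of Gal(N₁(ζ_p, ε^{1/p})/N₀) of order p if and only if β^{1+τ+⋯+τ^{p−1}} = 1. -/
open Finset Polynomial

lemma pr_pow_congr {M : Type*} [CommMonoid M] {ζ : M} {p : ℕ} (h1 : ζ ^ p = 1) {a b : ℕ}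
    (hab : a ≡ b [MOD p]) : ζ ^ a = ζ ^ b := by
  have key : ∀ n : ℕ, ζ ^ n = ζ ^ (n % p) := by
    intro n
    conv_lhs => rw [← Nat.div_add_mod n p]
    rw [pow_add, pow_mul, h1, one_pow, one_mul]
  have hab' : a % p = b % p := hab
  rw [key a, key b, hab']

lemma algeq_pow_fix {F A : Type*} [CommSemiring F] [Semiring A] [Algebra F A]
    (σ : A ≃ₐ[F] A) (x : A) (h : σ x = x) : ∀ n : ℕ, (σ ^ n) x = x := by
  intro n
  induction n with
  | zero => simp
  | succ n ih => rw [pow_succ, AlgEquiv.mul_apply, h, ih]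

lemma exists_nat_inverse (p : ℕ) (hp : p.Prime) {m : ℕ} (hm : ¬ p ∣ m) :
    ∃ x y : ℕ, m * x = 1 + p * y := by
  haveI : Fact p.Prime := ⟨hp⟩
  have hm0 : (m : ZMod p) ≠ 0 := by rwa [Ne, ZMod.natCast_eq_zero_iff]
  set v := ((m : ZMod p)⁻¹).val with hv
  have h1 : ((m * v : ℕ) : ZMod p) = ((1 : ℕ) : ZMod p) := by
    push_cast
    rw [hv, ZMod.natCast_val, ZMod.cast_id, mul_inv_cancel₀ hm0]
  have h2 : m * v % p = 1 % p := (ZMod.natCast_eq_natCast_iff _ _ _).mp h1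
  have h1p : 1 % p = 1 := Nat.mod_eq_of_lt hp.one_lt
  have h3 : 1 ≤ m * v := by
    rcases Nat.eq_zero_or_pos (m * v) with h | h
    · rw [h, Nat.zero_mod, h1p] at h2; omega
    · exact h
  obtain ⟨y, hy⟩ := (Nat.modEq_iff_dvd' h3).mp ((Nat.ModEq.symm (show m * v ≡ 1 [MOD p] from h2)))
  exact ⟨v, y, by omega⟩

lemma partA {p : ℕ} (hp : p.Prime)
    {N₀ N₁ N₂ : Type*} [Field N₀] [Field N₁] [Field N₂]
    [Algebra N₀ N₁] [Algebra N₁ N₂] [Algebra N₀ N₂] [IsScalarTower N₀ N₁ N₂]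
    (hchar : (p : N₀) ≠ 0) [IsGalois N₀ N₂]
    (τ : N₁ ≃ₐ[N₀] N₁) (hτ : orderOf τ = p)
    (ε : N₁) (hε : ε ≠ 0)
    (ζ r : N₂) (hζ : IsPrimitiveRoot ζ p) (hr : r ^ p = algebraMap N₁ N₂ ε)
    (hgen : Algebra.adjoin N₁ ({ζ, r} : Set N₂) = ⊤)
    (τt : N₂ ≃ₐ[N₀] N₂)
    (hcomm : ∀ x, τt (algebraMap N₁ N₂ x) = algebraMap N₁ N₂ (τ x))
    (hfix : τt ζ = ζ) :
    ∃ β : N₁, τ ε / ε = β ^ p := by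
  haveI : NeZero p := ⟨hp.ne_zero⟩
  haveI : Fact p.Prime := ⟨hp⟩
  have hcharN1 : (p : N₁) ≠ 0 := by
    intro h
    apply hchar
    apply (algebraMap N₀ N₁).injective
    rw [map_natCast, h, map_zero]
  have hεN : algebraMap N₁ N₂ ε ≠ 0 := by
    simpa using hε
  have hr0 : r ≠ 0 := by
    intro h
    rw [h, zero_pow hp.ne_zero] at hr
    exact hεN hr.symm
  have hτε : τ ε ≠ 0 := by simpa using hε
  have hq0 : τ ε / ε ≠ 0 := div_ne_zero hτε hε
  have hζ0 : ζ ≠ 0 := by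
    intro h
    have := hζ.pow_eq_one
    rw [h, zero_pow hp.ne_zero] at this
    exact zero_ne_one this
  set L : IntermediateField N₁ N₂ := IntermediateField.adjoin N₁ {ζ} with hLdef
  have hζL : ζ ∈ L := IntermediateField.mem_adjoin_simple_self N₁ ζ
  have hNL : ∀ x : N₁, algebraMap N₁ N₂ x ∈ L := fun x => L.algebraMap_mem x
  have hLfix : ∀ (σ : N₂ ≃ₐ[L] N₂) (x : N₂), x ∈ L → σ x = x := by
    intro σ x hx
    exact σ.commutes ⟨x, hx⟩
  have hζint : IsIntegral N₁ ζ :=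
    ⟨X ^ p - C 1, monic_X_pow_sub_C _ hp.ne_zero, by
      rw [eval₂_sub, eval₂_pow, eval₂_X, eval₂_C, hζ.pow_eq_one, map_one, sub_self]⟩
  have hrint : IsIntegral N₁ r :=
    ⟨X ^ p - C ε, monic_X_pow_sub_C _ hp.ne_zero, by
      rw [eval₂_sub, eval₂_pow, eval₂_X, eval₂_C, hr, sub_self]⟩
  -- finite dimensionality
  haveI : FiniteDimensional N₁ N₂ := by
    have h1 : IntermediateField.adjoin N₁ ({ζ, r} : Set N₂) = ⊤ :=
      IntermediateField.adjoin_eq_top_of_algebra (hS := hgen)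
    haveI : Finite ({ζ, r} : Set N₂) :=
      ((Set.finite_singleton r).insert ζ).to_subtype
    haveI h2 : FiniteDimensional N₁ (IntermediateField.adjoin N₁ ({ζ, r} : Set N₂)) := by
      apply IntermediateField.finiteDimensional_adjoin
      intro x hx
      rcases hx with h | h
      · rwa [h]
      · rw [Set.mem_singleton_iff] at h; rwa [h]
    rw [h1] at h2
    exact Module.Finite.equiv (IntermediateField.topEquiv (F := N₁) (E := N₂)).toLinearEquiv
  haveI : IsGalois N₁ N₂ := IsGalois.tower_top_of_isGalois N₀ N₁ N₂
  haveI : IsGalois L N₂ := IsGalois.tower_top_of_isGalois N₁ L N₂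
  haveI : FiniteDimensional L N₂ := Module.Finite.right N₁ L N₂
  haveI : FiniteDimensional N₁ L := Module.Finite.left N₁ L N₂
  set b : N₂ := τt r / r with hbdef
  have hb : b ^ p = algebraMap N₁ N₂ (τ ε / ε) := by
    rw [hbdef, div_pow, ← map_pow, hr, hcomm, map_div₀]
  have hb0 : b ≠ 0 := by
    intro h
    rw [h, zero_pow hp.ne_zero] at hb
    rw [map_div₀] at hb
    exact hq0 (by
      have := hb.symm
      rw [← map_div₀] at this
      simpa using this)
  -- every L-automorphism fixes b
  have hfixall : ∀ σ : N₂ ≃ₐ[L] N₂, σ b = b := by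
    intro σ
    by_contra hσb
    by_cases hcase : ∃ δ ∈ L, δ ^ p = algebraMap N₁ N₂ ε
    · -- then r ∈ L and everything is fixed
      obtain ⟨δ, hδL, hδ⟩ := hcase
      have hδ0 : δ ≠ 0 := by
        intro h
        rw [h, zero_pow hp.ne_zero] at hδ
        exact hεN hδ.symm
      have hrδ : (r / δ) ^ p = 1 := by rw [div_pow, hδ, hr, div_self hεN]
      obtain ⟨i, hip, hiδ⟩ := hζ.eq_pow_of_pow_eq_one hrδ
      have hrL : r ∈ L := by
        have hre : r = ζ ^ i * δ := by
          rw [hiδ]; field_simp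
        rw [hre]
        exact mul_mem (pow_mem hζL i) hδL
      have hall : ∀ x : N₂, x ∈ L := by
        intro x
        have hx : x ∈ Algebra.adjoin N₁ ({ζ, r} : Set N₂) := by
          rw [hgen]; exact Algebra.mem_top
        refine Algebra.adjoin_induction ?_ ?_ ?_ ?_ hx
        · rintro y (rfl | hy)
          · exact hζL
          · rw [Set.mem_singleton_iff] at hy; rw [hy]; exact hrL
        · exact hNL
        · intro y z _ _ hy hz; exact add_mem hy hz
        · intro y z _ _ hy hz; exact mul_mem hy hz
      exact hσb (hLfix σ b (hall b))
    · push_neg at hcase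
      -- σ r = ζ ^ j * r, σ b = ζ ^ t * b
      have hσr : (σ r / r) ^ p = 1 := by
        rw [div_pow, ← map_pow, hr, hLfix σ _ (hNL ε), div_self hεN]
      obtain ⟨j, hjp, hjσ⟩ := hζ.eq_pow_of_pow_eq_one hσr
      have hσr' : σ r = ζ ^ j * r := by
        rw [hjσ]; field_simp
      have hσb2 : (σ b / b) ^ p = 1 := by
        rw [div_pow, ← map_pow, hb, hLfix σ _ (hNL _), div_self (by simpa using hq0)]
      obtain ⟨t, htp, htσ⟩ := hζ.eq_pow_of_pow_eq_one hσb2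
      have hσb' : σ b = ζ ^ t * b := by
        rw [htσ]; field_simp
      have hζt1 : ζ ^ t ≠ 1 := by
        intro h
        exact hσb (by rw [hσb', h, one_mul])
      have hpt : ¬ p ∣ t := fun hdvd => hζt1 ((hζ.pow_eq_one_iff_dvd t).mpr hdvd)
      have hpj : ¬ p ∣ j := by
        intro hdvd
        have hσrr : σ r = r := by
          rw [hσr', (hζ.pow_eq_one_iff_dvd j).mpr hdvd, one_mul]
        have hall : ∀ x : N₂, σ x = x := by
          intro x
          have hx : x ∈ Algebra.adjoin N₁ ({ζ, r} : Set N₂) := by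
            rw [hgen]; exact Algebra.mem_top
          refine Algebra.adjoin_induction ?_ ?_ ?_ ?_ hx
          · rintro y (rfl | hy)
            · exact hLfix σ _ hζL
            · rw [Set.mem_singleton_iff] at hy; rw [hy]; exact hσrr
          · intro y; exact hLfix σ _ (hNL y)
          · intro y z _ _ hy hz; rw [map_add, hy, hz]
          · intro y z _ _ hy hz; rw [map_mul, hy, hz]
        exact hσb (hall b)
      obtain ⟨x1, y1, hxy1⟩ := exists_nat_inverse p hp hpj
      set m : ℕ := t * x1 with hm
      have hpm : ¬ p ∣ m := by
        intro h
        rcases (Nat.Prime.dvd_mul hp).mp h with h1 | h1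
        · exact hpt h1
        · have h2 : p ∣ j * x1 := Dvd.dvd.mul_left h1 j
          rw [hxy1] at h2
          have h3 : p ∣ 1 := (Nat.dvd_add_right ⟨y1, rfl⟩).mp (by rwa [add_comm] at h2)
          exact absurd (Nat.dvd_one.mp h3) hp.one_lt.ne'
      have hmj : m * j % p = t % p := by
        have hcalc : m * j = t + p * (t * y1) := by
          rw [hm, mul_assoc, mul_comm x1 j, hxy1]; ring
        rw [hcalc, Nat.add_mul_mod_self_left]
      set u : N₂ := b / r ^ m with hudef
      have hσu : σ u = u := by
        rw [hudef, map_div₀, map_pow, hσr', hσb', mul_pow, ← pow_mul]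
        have hzz : ζ ^ (j * m) = ζ ^ t :=
          pr_pow_congr hζ.pow_eq_one (by rw [mul_comm]; exact hmj)
        rw [hzz, mul_div_mul_left _ _ (pow_ne_zero t hζ0)]
      -- irreducibility of X^p - ε over L
      have hεLmap : algebraMap L N₂ (algebraMap N₁ L ε) = algebraMap N₁ N₂ ε :=
        (IsScalarTower.algebraMap_apply N₁ L N₂ ε).symm
      have hirr : Irreducible (X ^ p - C (algebraMap N₁ L ε)) := by
        apply X_pow_sub_C_irreducible_of_prime hp
        intro bb hbb
        apply hcase (bb : N₂) bb.2
        have h1 := congrArg (algebraMap L N₂) hbb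
        rw [map_pow, hεLmap] at h1
        exact h1
      have hrLint : IsIntegral L r :=
        ⟨X ^ p - C (algebraMap N₁ L ε), monic_X_pow_sub_C _ hp.ne_zero, by
          rw [eval₂_sub, eval₂_pow, eval₂_X, eval₂_C, hεLmap, hr, sub_self]⟩
      have hminr : minpoly L r = X ^ p - C (algebraMap N₁ L ε) := by
        refine (minpoly.eq_of_irreducible_of_monic hirr ?_ (monic_X_pow_sub_C _ hp.ne_zero)).symm
        rw [map_sub, map_pow, aeval_X, aeval_C, hεLmap, hr, sub_self]
      have hLrtop : IntermediateField.adjoin L ({r} : Set N₂) = ⊤ := by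
        have h1 : IntermediateField.adjoin L ({ζ, r} : Set N₂) = ⊤ :=
          IntermediateField.adjoin_eq_top_of_adjoin_eq_top (F := N₁)
            (IntermediateField.adjoin_eq_top_of_algebra (hS := hgen))
        rw [eq_top_iff, ← h1]
        apply IntermediateField.adjoin_le_iff.mpr
        rintro y (rfl | hy)
        · have h2 := (IntermediateField.adjoin L ({r} : Set N₂)).algebraMap_mem ⟨y, hζL⟩
          exact h2
        · rw [Set.mem_singleton_iff] at hy
          rw [hy]
          exact IntermediateField.subset_adjoin _ _ rfl
      have hfinrank : Module.finrank L N₂ = p := by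
        have h2 : Module.finrank L (IntermediateField.adjoin L ({r} : Set N₂)) = p := by
          rw [IntermediateField.adjoin.finrank hrLint, hminr, natDegree_X_pow_sub_C]
        rw [hLrtop] at h2
        rwa [IntermediateField.finrank_top'] at h2
      have hcard : Nat.card (N₂ ≃ₐ[L] N₂) = p := by
        rw [IsGalois.card_aut_eq_finrank, hfinrank]
      have hσ1 : σ ≠ 1 := fun h => hσb (by rw [h, AlgEquiv.one_apply])
      have hfixu : ∀ g : N₂ ≃ₐ[L] N₂, g u = u := by
        intro g
        obtain ⟨n, hn⟩ := mem_powers_of_prime_card hcard hσ1 (g' := g)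
        rw [← hn]
        exact algeq_pow_fix σ u hσu n
      have huL : u ∈ L := by
        have h1 : u ∈ IntermediateField.fixedField
            (IntermediateField.fixingSubgroup (⊥ : IntermediateField L N₂)) :=
          fun g => hfixu ↑g
        rw [IsGalois.fixedField_fixingSubgroup (⊥ : IntermediateField L N₂),
          IntermediateField.mem_bot] at h1
        obtain ⟨uL, huLeq⟩ := h1
        rw [← huLeq]
        exact uL.2
      -- the key relation
      have hup : algebraMap N₁ N₂ (τ ε) = algebraMap N₁ N₂ ε ^ (1 + m) * u ^ p := by
        have h1 : u ^ p = algebraMap N₁ N₂ (τ ε / ε) / algebraMap N₁ N₂ ε ^ m := by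
          rw [hudef, div_pow, hb, ← pow_mul, mul_comm m p, pow_mul, hr]
        rw [h1, map_div₀]
        field_simp
        ring
      have hτtL : ∀ x ∈ L, τt x ∈ L := by
        intro x hx
        have hx' : x ∈ IntermediateField.adjoin N₁ ({ζ} : Set N₂) := by
          rw [← hLdef]; exact hx
        refine IntermediateField.adjoin_induction N₁
          (p := fun y _ => τt y ∈ L) ?_ ?_ ?_ ?_ ?_ hx'
        · rintro y hy
          rw [Set.mem_singleton_iff] at hy
          rw [hy, hfix]
          exact hζL
        · intro y
          rw [hcomm]
          exact hNL _
        · intro y z _ _ hy hz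
          rw [map_add]
          exact add_mem hy hz
        · intro y _ hy
          rw [map_inv₀]
          exact inv_mem hy
        · intro y z _ _ hy hz
          rw [map_mul]
          exact mul_mem hy hz
      have hiter : ∀ n : ℕ, ∃ w ∈ L,
          algebraMap N₁ N₂ ((τ ^ n) ε) =
            algebraMap N₁ N₂ ε ^ ((1 + m) ^ n) * w ^ p := by
        intro n
        induction n with
        | zero => exact ⟨1, one_mem L, by simp⟩
        | succ n ih =>
          obtain ⟨w, hwL, hw⟩ := ih
          refine ⟨u ^ ((1 + m) ^ n) * τt w,
            mul_mem (pow_mem huL _) (hτtL w hwL), ?_⟩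
          have h1 := congrArg τt hw
          rw [hcomm, map_mul, map_pow, map_pow, hcomm] at h1
          have h2 : τ ((τ ^ n) ε) = (τ ^ (n + 1)) ε := by
            rw [pow_succ', AlgEquiv.mul_apply]
          rw [h2] at h1
          rw [h1, hup, mul_pow, ← pow_mul, ← pow_mul, mul_pow, ← pow_mul]
          rw [pow_succ', mul_comm p ((1 + m) ^ n)]
          ring
      obtain ⟨w, hwL, hw⟩ := hiter p
      have hτp : (τ ^ p) ε = ε := by
        rw [← hτ, pow_orderOf_eq_one, AlgEquiv.one_apply]
      rw [hτp] at hw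
      have hw0 : w ≠ 0 := by
        intro h
        rw [h, zero_pow hp.ne_zero, mul_zero] at hw
        exact hεN hw
      have hf : (1 + m) ≡ (1 + m) ^ p [MOD p] := by
        symm
        rw [← ZMod.natCast_eq_natCast_iff]
        push_cast
        rw [ZMod.pow_card]
      have hge : 1 + m ≤ (1 + m) ^ p := Nat.le_self_pow hp.ne_zero _
      obtain ⟨M, hM⟩ := (Nat.modEq_iff_dvd' hge).mp hf
      have hMeq : (1 + m) ^ p = 1 + m + p * M := by omega
      rw [hMeq] at hw
      have h4 : algebraMap N₁ N₂ ε ^ m * (algebraMap N₁ N₂ ε ^ M * w) ^ p = 1 := by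
        have h3 : algebraMap N₁ N₂ ε * 1 =
            algebraMap N₁ N₂ ε *
              (algebraMap N₁ N₂ ε ^ m * (algebraMap N₁ N₂ ε ^ M * w) ^ p) := by
          rw [mul_one]
          calc algebraMap N₁ N₂ ε
              = algebraMap N₁ N₂ ε ^ (1 + m + p * M) * w ^ p := hw
            _ = _ := by
                rw [mul_pow, ← pow_mul, pow_add, pow_add, pow_one, mul_comm M p]
                ring
        exact (mul_left_cancel₀ hεN h3).symm
      have h5 : algebraMap N₁ N₂ ε ^ m = ((algebraMap N₁ N₂ ε ^ M * w)⁻¹) ^ p := by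
        rw [inv_pow]
        exact eq_inv_of_mul_eq_one_left h4
      obtain ⟨x2, y2, hxy2⟩ := exists_nat_inverse p hp hpm
      have hvL : ((algebraMap N₁ N₂ ε ^ M * w)⁻¹) ^ x2 * (algebraMap N₁ N₂ ε ^ y2)⁻¹ ∈ L := by
        apply mul_mem
        · exact pow_mem (inv_mem (mul_mem (pow_mem (hNL ε) M) hwL)) x2
        · exact inv_mem (pow_mem (hNL ε) y2)
      have h6 : (((algebraMap N₁ N₂ ε ^ M * w)⁻¹) ^ x2 * (algebraMap N₁ N₂ ε ^ y2)⁻¹) ^ p =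
          algebraMap N₁ N₂ ε := by
        have e1 : (((algebraMap N₁ N₂ ε ^ M * w)⁻¹) ^ x2) ^ p =
            algebraMap N₁ N₂ ε ^ (m * x2) := by
          rw [← pow_mul, mul_comm x2 p, pow_mul, ← h5, ← pow_mul]
        have e2 : algebraMap N₁ N₂ ε ^ (m * x2) =
            algebraMap N₁ N₂ ε * (algebraMap N₁ N₂ ε ^ y2) ^ p := by
          rw [hxy2, pow_add, pow_one, ← pow_mul, mul_comm p y2]
        rw [mul_pow, e1, e2, inv_pow, mul_assoc,
          mul_inv_cancel₀ (pow_ne_zero _ (pow_ne_zero _ hεN)), mul_one]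
      exact hcase _ hvL h6
  -- b lies in L
  have hbmem : ∃ bL : L, algebraMap L N₂ bL = b := by
    have h1 : b ∈ IntermediateField.fixedField
        (IntermediateField.fixingSubgroup (⊥ : IntermediateField L N₂)) :=
      fun g => hfixall ↑g
    rw [IsGalois.fixedField_fixingSubgroup (⊥ : IntermediateField L N₂),
      IntermediateField.mem_bot] at h1
    exact h1
  obtain ⟨bL, hbLeq⟩ := hbmem
  -- norm descent
  have hbLp : bL ^ p = algebraMap N₁ L (τ ε / ε) := by
    apply (algebraMap L N₂).injective
    rw [map_pow, hbLeq, hb, ← IsScalarTower.algebraMap_apply]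
  set d : ℕ := Module.finrank N₁ L with hd
  have hNm : (Algebra.norm N₁ bL) ^ p = (τ ε / ε) ^ d := by
    rw [← map_pow, hbLp, Algebra.norm_algebraMap]
  have hd0 : 0 < d := Module.finrank_pos
  have hdlt : d < p := by
    have hdeg : d = (minpoly N₁ ζ).natDegree := IntermediateField.adjoin.finrank hζint
    have hQ0 : (∑ i ∈ range p, (X : N₁[X]) ^ i) ≠ 0 := by
      intro h
      have h1 : Polynomial.eval 1 (∑ i ∈ range p, (X : N₁[X]) ^ i) = p := by
        rw [Polynomial.eval_finset_sum]
        simp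
      rw [h] at h1
      simp at h1
      exact hcharN1 h1.symm
    have hQζ : Polynomial.aeval ζ (∑ i ∈ range p, (X : N₁[X]) ^ i) = 0 := by
      rw [map_sum]
      simp only [map_pow, aeval_X]
      have hζ1 : ζ ≠ 1 := by
        have := hζ.pow_ne_one_of_pos_of_lt one_ne_zero hp.one_lt
        simpa using this
      rw [geom_sum_eq hζ1, hζ.pow_eq_one, sub_self, zero_div]
    have hdegQ : (∑ i ∈ range p, (X : N₁[X]) ^ i).natDegree ≤ p - 1 := by
      apply Polynomial.natDegree_sum_le_of_forall_le
      intro i hi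
      rw [Polynomial.natDegree_X_pow]
      exact Nat.le_sub_one_of_lt (mem_range.mp hi)
    have hmd := Polynomial.natDegree_le_natDegree (minpoly.degree_le_of_ne_zero N₁ ζ hQ0 hQζ)
    omega
  have hpd : ¬ p ∣ d := fun h => absurd (Nat.le_of_dvd hd0 h) (by omega)
  obtain ⟨x3, y3, hxy3⟩ := exists_nat_inverse p hp hpd
  refine ⟨Algebra.norm N₁ bL ^ x3 / (τ ε / ε) ^ y3, ?_⟩
  have hNm0 : Algebra.norm N₁ bL ≠ 0 := by
    intro h
    rw [h, zero_pow hp.ne_zero] at hNm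
    exact pow_ne_zero d hq0 hNm.symm
  rw [div_pow, ← pow_mul, ← pow_mul, mul_comm x3 p, pow_mul, hNm, ← pow_mul, hxy3,
    pow_add, pow_one, mul_comm p y3, mul_div_assoc, div_self (pow_ne_zero _ hq0), mul_one]
section Helpers

variable {N₀ N₁ N₂ : Type*} [Field N₀] [Field N₁] [Field N₂]
    [Algebra N₀ N₁] [Algebra N₁ N₂] [Algebra N₀ N₂] [IsScalarTower N₀ N₁ N₂]

lemma pow_commutes' (τ : N₁ ≃ₐ[N₀] N₁) (τ' : N₂ ≃ₐ[N₀] N₂)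
    (h : ∀ x, τ' (algebraMap N₁ N₂ x) = algebraMap N₁ N₂ (τ x)) :
    ∀ (n : ℕ) (x : N₁), (τ' ^ n) (algebraMap N₁ N₂ x) = algebraMap N₁ N₂ ((τ ^ n) x) := by
  intro n
  induction n with
  | zero => simp
  | succ n ih =>
    intro x
    rw [pow_succ, AlgEquiv.mul_apply, h, ih, pow_succ, AlgEquiv.mul_apply]

lemma pow_apply_root (τ' : N₂ ≃ₐ[N₀] N₂) (ζ : N₂) (c : ℕ) (h : τ' ζ = ζ ^ c) :
    ∀ n : ℕ, (τ' ^ n) ζ = ζ ^ (c ^ n) := by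
  intro n
  induction n with
  | zero => simp
  | succ n ih =>
    rw [pow_succ', AlgEquiv.mul_apply, ih, map_pow, h, ← pow_mul, pow_succ', pow_mul']

lemma exists_good_lift (p : ℕ) (hp : p.Prime) [IsGalois N₀ N₂]
    (τ : N₁ ≃ₐ[N₀] N₁) (hτ : orderOf τ = p)
    (ζ : N₂) (hζ : IsPrimitiveRoot ζ p) :
    ∃ τ' : N₂ ≃ₐ[N₀] N₂,
      (∀ x, τ' (algebraMap N₁ N₂ x) = algebraMap N₁ N₂ (τ x)) ∧ τ' ζ = ζ := by
  haveI : NeZero p := ⟨hp.ne_zero⟩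
  have h2p : 2 ≤ p := hp.two_le
  haveI : Fact p.Prime := ⟨hp⟩
  have hordζ : orderOf ζ = p := hζ.eq_orderOf.symm
  set τ₀ := τ.liftNormal N₂ with hτ₀
  have hcomm : ∀ x, τ₀ (algebraMap N₁ N₂ x) = algebraMap N₁ N₂ (τ x) :=
    fun x => AlgEquiv.liftNormal_commutes τ N₂ x
  have h1 : (τ₀ ζ) ^ p = 1 := by rw [← map_pow, hζ.pow_eq_one, map_one]
  obtain ⟨c, hcp, hcζ⟩ := hζ.eq_pow_of_pow_eq_one h1
  have hζ1 : ζ ≠ 1 := by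
    have := hζ.pow_ne_one_of_pos_of_lt one_ne_zero hp.one_lt
    simpa using this
  have hc0 : (c : ZMod p) ≠ 0 := by
    intro h0
    rw [ZMod.natCast_eq_zero_iff] at h0
    have : ζ ^ c = 1 := by
      rw [← orderOf_dvd_iff_pow_eq_one, hordζ]; exact h0
    rw [this] at hcζ
    exact hζ1 (by simpa using congrArg τ₀.symm hcζ.symm)
  -- the exponent s
  set s : ℕ := ((p - 1).factorial) ^ (p - 1) with hs
  have hfac0 : ((p - 1).factorial : ZMod p) ≠ 0 := by
    rw [Ne, ZMod.natCast_eq_zero_iff]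
    rw [Nat.Prime.dvd_factorial hp]
    omega
  have hs1 : s ≡ 1 [MOD p] := by
    rw [← ZMod.natCast_eq_natCast_iff, hs]
    push_cast
    rw [ZMod.pow_card_sub_one_eq_one hfac0]
  have hdvd : (p - 1) ∣ s := by
    have h1 : (p - 1) ∣ (p - 1).factorial := Nat.dvd_factorial (by omega) le_rfl
    exact h1.trans (dvd_pow_self _ (by omega))
  have hs2 : ∀ d : ZMod p, d ≠ 0 → d ^ s = 1 := by
    intro d hd
    obtain ⟨m, hm⟩ := hdvd
    rw [hm, pow_mul, ZMod.pow_card_sub_one_eq_one hd, one_pow]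
  refine ⟨τ₀ ^ s, ?_, ?_⟩
  · intro x
    rw [pow_commutes' τ τ₀ hcomm s x]
    congr 1
    have : τ ^ s = τ ^ 1 := by
      rw [pow_eq_pow_iff_modEq, hτ]; exact hs1
    rw [this, pow_one]
  · rw [pow_apply_root τ₀ ζ c hcζ.symm s]
    have hmod : c ^ s ≡ 1 [MOD p] := by
      rw [← ZMod.natCast_eq_natCast_iff]
      push_cast
      rw [hs2 _ hc0]
    rw [pr_pow_congr hζ.pow_eq_one hmod, pow_one]


lemma pow_apply_r (p k : ℕ) (τ : N₁ ≃ₐ[N₀] N₁) (τ' : N₂ ≃ₐ[N₀] N₂)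
    (h : ∀ x, τ' (algebraMap N₁ N₂ x) = algebraMap N₁ N₂ (τ x))
    (ζ r : N₂) (β : N₁) (hfix : τ' ζ = ζ)
    (hrr : τ' r = ζ ^ k * r * algebraMap N₁ N₂ β) :
    ∀ n : ℕ, (τ' ^ n) r =
      ζ ^ (n * k) * r * algebraMap N₁ N₂ (∏ i ∈ range n, (τ ^ i) β) := by
  intro n
  induction n with
  | zero => simp
  | succ n ih =>
    rw [pow_succ', AlgEquiv.mul_apply, ih, map_mul, map_mul, map_pow, hfix, hrr, h, map_prod]
    have h1 : ∀ i ∈ range n, τ ((τ ^ i) β) = (τ ^ (i + 1)) β := fun i _ => by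
      rw [← AlgEquiv.mul_apply, ← pow_succ']
    have h2 : (∏ x ∈ range n, τ ((τ ^ x) β)) = ∏ i ∈ range n, (τ ^ (i + 1)) β :=
      Finset.prod_congr rfl h1
    rw [h2, prod_range_succ', pow_zero, AlgEquiv.one_apply, map_mul, add_mul, one_mul, pow_add]
    ring



end Helpers

set_option maxHeartbeats 1000000

/-- Let p be a prime, N₁/N₀ a Galois extension of fields of characteristic ≠ p whose
Galois group contains an element τ of order p, and ε ∈ N₁× such that
N₂ = N₁(ζ_p, ε^{1/p}) is Galois over N₀. Then τ(ε)/ε = β^p for some β ∈ N₁, and τ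
extends to an element of Gal(N₂/N₀) of order p iff β^{1+τ+⋯+τ^{p−1}} = 1. -/
theorem stmt_8 (p : ℕ) (hp : p.Prime)
    (N₀ N₁ N₂ : Type*) [Field N₀] [Field N₁] [Field N₂]
    [Algebra N₀ N₁] [Algebra N₁ N₂] [Algebra N₀ N₂] [IsScalarTower N₀ N₁ N₂]
    (hchar : (p : N₀) ≠ 0) [IsGalois N₀ N₁] [IsGalois N₀ N₂]
    (τ : N₁ ≃ₐ[N₀] N₁) (hτ : orderOf τ = p)
    (ε : N₁) (hε : ε ≠ 0)
    (ζ r : N₂) (hζ : IsPrimitiveRoot ζ p) (hr : r ^ p = algebraMap N₁ N₂ ε)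
    (hgen : Algebra.adjoin N₁ ({ζ, r} : Set N₂) = ⊤) :
    ∃ β : N₁, τ ε / ε = β ^ p ∧
      ((∃ τ' : N₂ ≃ₐ[N₀] N₂, orderOf τ' = p ∧
          ∀ x : N₁, τ' (algebraMap N₁ N₂ x) = algebraMap N₁ N₂ (τ x)) ↔
        ∏ i ∈ Finset.range p, (τ ^ i) β = 1) := by
  haveI : NeZero p := ⟨hp.ne_zero⟩
  haveI : Fact p.Prime := ⟨hp⟩
  have hεN : algebraMap N₁ N₂ ε ≠ 0 := by simpa using hε
  have hτε : τ ε ≠ 0 := by simpa using hε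
  have hq0 : τ ε / ε ≠ 0 := div_ne_zero hτε hε
  have hr0 : r ≠ 0 := by
    intro h
    rw [h, zero_pow hp.ne_zero] at hr
    exact hεN hr.symm
  obtain ⟨τt, hτtcomm, hτtζ⟩ := exists_good_lift p hp τ hτ ζ hζ
  obtain ⟨β, hβ⟩ := partA hp hchar τ hτ ε hε ζ r hζ hr hgen τt hτtcomm hτtζ
  have hβ0 : β ≠ 0 := by
    intro h
    rw [h, zero_pow hp.ne_zero] at hβ
    exact hq0 hβ
  have hβN : algebraMap N₁ N₂ β ≠ 0 := by simpa using hβ0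
  have hεβ : ε * β ^ p = τ ε := by
    rw [← hβ]
    field_simp
  have hrB : r * algebraMap N₁ N₂ β ≠ 0 := mul_ne_zero hr0 hβN
  refine ⟨β, hβ, ?_, ?_⟩
  · -- forward direction
    rintro ⟨τ', hord, hcomm'⟩
    have hτ'p : τ' ^ p = 1 := by rw [← hord]; exact pow_orderOf_eq_one τ'
    have h1 : (τ' ζ) ^ p = 1 := by rw [← map_pow, hζ.pow_eq_one, map_one]
    obtain ⟨c, hcp, hcζ⟩ := hζ.eq_pow_of_pow_eq_one h1
    have hfermat : c ^ p ≡ c [MOD p] := by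
      rw [← ZMod.natCast_eq_natCast_iff]
      push_cast
      rw [ZMod.pow_card]
    have hτ'ζ : τ' ζ = ζ := by
      have h2 := pow_apply_root τ' ζ c hcζ.symm p
      rw [hτ'p, AlgEquiv.one_apply] at h2
      rw [← hcζ]
      calc ζ ^ c = ζ ^ (c ^ p) := (pr_pow_congr hζ.pow_eq_one hfermat).symm
        _ = ζ := h2.symm
    have hW : (τ' r / (r * algebraMap N₁ N₂ β)) ^ p = 1 := by
      rw [div_pow, mul_pow, ← map_pow τ' r p, hr, hcomm',
        ← map_pow (algebraMap N₁ N₂) β p, ← map_mul, hεβ]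
      exact div_self (by simpa using hτε)
    obtain ⟨k, hkp, hkW⟩ := hζ.eq_pow_of_pow_eq_one hW
    rw [eq_div_iff hrB] at hkW
    have hrr : τ' r = ζ ^ k * r * algebraMap N₁ N₂ β := by
      rw [← hkW]; ring
    have hfin := pow_apply_r p k τ τ' hcomm' ζ r β hτ'ζ hrr p
    rw [hτ'p, AlgEquiv.one_apply, pow_mul, hζ.pow_eq_one, one_pow, one_mul] at hfin
    have h3 : r * 1 = r * algebraMap N₁ N₂ (∏ i ∈ Finset.range p, (τ ^ i) β) := by
      rw [mul_one]
      exact hfin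
    have h4 := (mul_left_cancel₀ hr0 h3).symm
    apply (algebraMap N₁ N₂).injective
    rw [h4, map_one]
  · -- backward direction
    intro hN
    have hW : (τt r / (r * algebraMap N₁ N₂ β)) ^ p = 1 := by
      rw [div_pow, mul_pow, ← map_pow τt r p, hr, hτtcomm,
        ← map_pow (algebraMap N₁ N₂) β p, ← map_mul, hεβ]
      exact div_self (by simpa using hτε)
    obtain ⟨k, hkp, hkW⟩ := hζ.eq_pow_of_pow_eq_one hW
    rw [eq_div_iff hrB] at hkW
    have hrr : τt r = ζ ^ k * r * algebraMap N₁ N₂ β := by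
      rw [← hkW]; ring
    have hτtr : (τt ^ p) r = r := by
      have hfin := pow_apply_r p k τ τt hτtcomm ζ r β hτtζ hrr p
      rw [hN, map_one, mul_one, pow_mul, hζ.pow_eq_one, one_pow, one_mul] at hfin
      exact hfin
    have hτtp : τt ^ p = 1 := by
      apply AlgEquiv.ext
      intro x
      rw [AlgEquiv.one_apply]
      have hx : x ∈ Algebra.adjoin N₁ ({ζ, r} : Set N₂) := by
        rw [hgen]; exact Algebra.mem_top
      refine Algebra.adjoin_induction ?_ ?_ ?_ ?_ hx
      · rintro y (rfl | hy)
        · exact algeq_pow_fix τt y hτtζ p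
        · rw [Set.mem_singleton_iff] at hy
          rw [hy]
          exact hτtr
      · intro y
        rw [pow_commutes' τ τt hτtcomm p y, ← hτ, pow_orderOf_eq_one, AlgEquiv.one_apply]
      · intro y z _ _ hy hz
        rw [map_add, hy, hz]
      · intro y z _ _ hy hz
        rw [map_mul, hy, hz]
    have hτt1 : τt ≠ 1 := by
      intro h
      have h2 : τ = 1 := by
        apply AlgEquiv.ext
        intro x
        apply (algebraMap N₁ N₂).injective
        rw [← hτtcomm x, h, AlgEquiv.one_apply, AlgEquiv.one_apply]
      rw [h2, orderOf_one] at hτ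
      exact hp.one_lt.ne' hτ.symm
    have hord : orderOf τt = p := by
      have hdvd := orderOf_dvd_of_pow_eq_one hτtp
      rcases (Nat.dvd_prime hp).mp hdvd with h | h
      · exact absurd (orderOf_eq_one_iff.mp h) hτt1
      · exact h
    exact ⟨τt, hord, hτtcomm⟩
end

section
/- Let π = 1 − ζ₉ in Z₃[ζ₉] and let a, b ∈ Z₃. Then (1 + aπ + bπ² + O(π³))³ ≡ 1 + aπ³ + bπ⁶ − aπ⁷ − (a² + b)π⁸ (mod π⁹). In particular, every cube of a unit congruent to 1 mod π is congruent mod π³ to 1. -/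
noncomputable section
abbrev K9 := CyclotomicField 9 ℚ_[3]
instance : Algebra ℤ_[3] K9 := ((algebraMap ℚ_[3] K9).comp (algebraMap ℤ_[3] ℚ_[3])).toAlgebra
abbrev R9 := integralClosure ℤ_[3] K9

set_option maxHeartbeats 4000000 in
private lemma aux_cube {R : Type*} [CommRing R] (z A B s C Dv : R)
    (hrel : z ^ 6 + z ^ 3 + 1 = 0) (hCC : A ^ 3 - A - 3 * C = 0)
    (hDD : B ^ 3 - B - 3 * Dv = 0) :
    (1 - z) ^ 9 ∣
      ((1 + A * (1 - z) + B * (1 - z) ^ 2 + (1 - z) ^ 3 * s) ^ 3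
        - (1 + A * (1 - z) ^ 3 + B * (1 - z) ^ 6 - A * (1 - z) ^ 7
            - (A ^ 2 + B) * (1 - z) ^ 8)) :=
  ⟨(-6)*Dv + (-6)*Dv*(1-z) + 24*Dv*(1-z)^2 + (-28)*Dv*(1-z)^3 + 15*Dv*(1-z)^4 + (-3)*Dv*(1-z)^5 + 38*C + (-51)*C*(1-z) + 21*C*(1-z)^2 + 14*C*(1-z)^3 + (-16)*C*(1-z)^4 + 4*C*(1-z)^5 + 38*s + (-51)*s*(1-z) + 21*s*(1-z)^2 + 14*s*(1-z)^3 + (-16)*s*(1-z)^4 + 4*s*(1-z)^5 + (-6)*s^2 + (-6)*s^2*(1-z) + 24*s^2*(1-z)^2 + (-28)*s^2*(1-z)^3 + 15*s^2*(1-z)^4 + (-3)*s^2*(1-z)^5 + s^3 + 66*B + (-213)*B*(1-z) + 287*B*(1-z)^2 + (-211)*B*(1-z)^3 + 82*B*(1-z)^4 + (-13)*B*(1-z)^5 + (-48)*B*s + 120*B*s*(1-z) + (-140)*B*s*(1-z)^2 + 90*B*s*(1-z)^3 + (-30)*B*s*(1-z)^4 + 4*B*s*(1-z)^5 + 9*B*s^2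 + (-18)*B*s^2*(1-z) + 21*B*s^2*(1-z)^2 + (-15)*B*s^2*(1-z)^3 + 6*B*s^2*(1-z)^4 + (-1)*B*s^2*(1-z)^5 + (-12)*B^2 + 74*B^2*(1-z) + (-123)*B^2*(1-z)^2 + 105*B^2*(1-z)^3 + (-46)*B^2*(1-z)^4 + 8*B^2*(1-z)^5 + 9*B^2*s + (-33)*B^2*s*(1-z) + 48*B^2*s*(1-z)^2 + (-39)*B^2*s*(1-z)^3 + 17*B^2*s*(1-z)^4 + (-3)*B^2*s*(1-z)^5 + (-15)*A + (-109)*A*(1-z) + 251*A*(1-z)^2 + (-248)*A*(1-z)^3 + 119*A*(1-z)^4 + (-22)*A*(1-z)^5 + (-24)*A*s + 148*A*s*(1-z) + (-246)*A*s*(1-z)^2 + 210*A*s*(1-z)^3 + (-92)*A*s*(1-z)^4 + 16*A*s*(1-z)^5 + 9*A*s^2 + (-33)*A*s^2*(1-z) + 48*A*s^2*(1-z)^2 + (-39)*A*s^2*(1-z)^3 + 17*A*s^2*(1-z)^4 + (-3)*A*s^2*(1-z)^5 + 76*A*B + (-102)*A*B*(1-z) + 42*A*B*(1-z)^2 + 28*A*B*(1-z)^3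 + (-32)*A*B*(1-z)^4 + 8*A*B*(1-z)^5 + (-12)*A*B*s + (-12)*A*B*s*(1-z) + 48*A*B*s*(1-z)^2 + (-56)*A*B*s*(1-z)^3 + 30*A*B*s*(1-z)^4 + (-6)*A*B*s*(1-z)^5 + (-24)*A*B^2 + 60*A*B^2*(1-z) + (-70)*A*B^2*(1-z)^2 + 45*A*B^2*(1-z)^3 + (-15)*A*B^2*(1-z)^4 + 2*A*B^2*(1-z)^5 + 66*A^2 + (-213)*A^2*(1-z) + 287*A^2*(1-z)^2 + (-211)*A^2*(1-z)^3 + 82*A^2*(1-z)^4 + (-13)*A^2*(1-z)^5 + (-24)*A^2*s + 60*A^2*s*(1-z) + (-70)*A^2*s*(1-z)^2 + 45*A^2*s*(1-z)^3 + (-15)*A^2*s*(1-z)^4 + 2*A^2*s*(1-z)^5 + (-12)*A^2*B + 74*A^2*B*(1-z) + (-123)*A^2*B*(1-z)^2 + 105*A^2*B*(1-z)^3 + (-46)*A^2*B*(1-z)^4 + 8*A^2*B*(1-z)^5, by linear_combination (Dv*(1-z)^6 + 3*Dv*(1-z)^7 + 3*Dv*(1-z)^8 + C*(1-z)^3 +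 3*C*(1-z)^4 + 3*C*(1-z)^5 + (-2)*C*(1-z)^6 + (-8)*C*(1-z)^7 + (-4)*C*(1-z)^8 + s*(1-z)^3 + 3*s*(1-z)^4 + 3*s*(1-z)^5 + (-2)*s*(1-z)^6 + (-8)*s*(1-z)^7 + (-4)*s*(1-z)^8 + s^2*(1-z)^6 + 3*s^2*(1-z)^7 + 3*s^2*(1-z)^8 + B*(1-z)^2 + 3*B*(1-z)^3 + 3*B*(1-z)^4 + (-2)*B*(1-z)^5 + (-8)*B*(1-z)^6 + (-4)*B*(1-z)^7 + 13*B*(1-z)^8 + 2*B*s*(1-z)^5 + 6*B*s*(1-z)^6 + 6*B*s*(1-z)^7 + (-4)*B*s*(1-z)^8 + B*s^2*(1-z)^8 + B^2*(1-z)^4 + 3*B^2*(1-z)^5 + 3*B^2*(1-z)^6 + (-2)*B^2*(1-z)^7 + (-8)*B^2*(1-z)^8 + B^2*s*(1-z)^7 + 3*B^2*s*(1-z)^8 + A*(1-z) + 3*A*(1-z)^2 + 3*A*(1-z)^3 + (-2)*A*(1-z)^4 + (-8)*A*(1-z)^5 + (-4)*A*(1-z)^6 + 13*A*(1-z)^7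 + 22*A*(1-z)^8 + 2*A*s*(1-z)^4 + 6*A*s*(1-z)^5 + 6*A*s*(1-z)^6 + (-4)*A*s*(1-z)^7 + (-16)*A*s*(1-z)^8 + A*s^2*(1-z)^7 + 3*A*s^2*(1-z)^8 + 2*A*B*(1-z)^3 + 6*A*B*(1-z)^4 + 6*A*B*(1-z)^5 + (-4)*A*B*(1-z)^6 + (-16)*A*B*(1-z)^7 + (-8)*A*B*(1-z)^8 + 2*A*B*s*(1-z)^6 + 6*A*B*s*(1-z)^7 + 6*A*B*s*(1-z)^8 + A*B^2*(1-z)^5 + 3*A*B^2*(1-z)^6 + 3*A*B^2*(1-z)^7 + (-2)*A*B^2*(1-z)^8 + A^2*(1-z)^2 + 3*A^2*(1-z)^3 + 3*A^2*(1-z)^4 + (-2)*A^2*(1-z)^5 + (-8)*A^2*(1-z)^6 + (-4)*A^2*(1-z)^7 + 13*A^2*(1-z)^8 + A^2*s*(1-z)^5 + 3*A^2*s*(1-z)^6 + 3*A^2*s*(1-z)^7 + (-2)*A^2*s*(1-z)^8 + A^2*B*(1-z)^4 + 3*A^2*B*(1-z)^5 + 3*A^2*B*(1-z)^6 + (-2)*A^2*B*(1-z)^7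 + (-8)*A^2*B*(1-z)^8) * hrel + (1-z)^3 * hCC + (1-z)^6 * hDD⟩

set_option maxHeartbeats 1000000 in
private lemma aux_unit {R : Type*} [CommRing R] (z u v : R)
    (hrel : z ^ 6 + z ^ 3 + 1 = 0) (hv : u - 1 = (1 - z) * v) :
    (1 - z) ^ 3 ∣ (u ^ 3 - 1) := by
  have h3 : (3 : R) = (1 - z) ^ 3 * ((-6) + (-6)*(1-z) + 24*(1-z)^2 + (-28)*(1-z)^3 + 15*(1-z)^4 + (-3)*(1-z)^5) := by
    linear_combination (1 + 3*(1-z) + 3*(1-z)^2) * hrel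
  have hu' : u = 1 + (1 - z) * v := by linear_combination hv
  refine ⟨v ^ 3 + (1 - z) * ((-6) + (-6)*(1-z) + 24*(1-z)^2 + (-28)*(1-z)^3 + 15*(1-z)^4 + (-3)*(1-z)^5) * v + (1 - z) ^ 2 * ((-6) + (-6)*(1-z) + 24*(1-z)^2 + (-28)*(1-z)^3 + 15*(1-z)^4 + (-3)*(1-z)^5) * v ^ 2, ?_⟩
  rw [hu']
  linear_combination ((1 - z) * v + (1 - z) ^ 2 * v ^ 2) * h3

set_option maxHeartbeats 1000000 in
set_option synthInstance.maxHeartbeats 1000000 in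
/-- (1 + aπ + bπ² + O(π³))³ ≡ 1 + aπ³ + bπ⁶ − aπ⁷ − (a²+b)π⁸ (mod π⁹) for a, b ∈ Z₃;
in particular the cube of any element ≡ 1 mod π is ≡ 1 mod π³. -/
theorem stmt_11 (ζ : R9) (h : IsPrimitiveRoot ζ 9) (a b : ℤ_[3]) (t : R9)
    (ht : (1 - ζ) ^ 3 ∣ t) :
    (1 - ζ) ^ 9 ∣
      ((1 + algebraMap ℤ_[3] R9 a * (1 - ζ) + algebraMap ℤ_[3] R9 b * (1 - ζ) ^ 2 + t) ^ 3
        - (1 + algebraMap ℤ_[3] R9 a * (1 - ζ) ^ 3 + algebraMap ℤ_[3] R9 b * (1 - ζ) ^ 6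
            - algebraMap ℤ_[3] R9 a * (1 - ζ) ^ 7
            - algebraMap ℤ_[3] R9 (a ^ 2 + b) * (1 - ζ) ^ 8)) ∧
    ∀ u : R9, (1 - ζ) ∣ (u - 1) → (1 - ζ) ^ 3 ∣ (u ^ 3 - 1) := by
  have hζ9 : ζ ^ 9 = 1 := h.pow_eq_one
  have h3ne : ζ ^ 3 ≠ 1 := h.pow_ne_one_of_pos_of_lt (by norm_num) (by norm_num)
  have hrel : ζ ^ 6 + ζ ^ 3 + 1 = 0 := by
    have h9 : (ζ ^ 3 - 1) * (ζ ^ 6 + ζ ^ 3 + 1) = 0 := by linear_combination hζ9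
    rcases mul_eq_zero.mp h9 with h' | h'
    · exact absurd (by linear_combination h') h3ne
    · exact h'
  have key : ∀ x : ℤ_[3], (3 : ℤ_[3]) ∣ x ^ 3 - x := by
    intro x
    have h0 : (x ^ 3 - x) ∈ RingHom.ker (PadicInt.toZMod (p := 3)) := by
      rw [RingHom.mem_ker, map_sub, map_pow]
      generalize (PadicInt.toZMod x : ZMod 3) = y
      revert y; decide
    rw [PadicInt.ker_toZMod, PadicInt.maximalIdeal_eq_span_p,
      Ideal.mem_span_singleton] at h0
    exact_mod_cast h0
  constructor
  · obtain ⟨s, hs⟩ := ht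
    obtain ⟨c, hc⟩ := key a
    obtain ⟨d, hd⟩ := key b
    have hCC : (algebraMap ℤ_[3] R9 a) ^ 3 - algebraMap ℤ_[3] R9 a
        - 3 * algebraMap ℤ_[3] R9 c = 0 := by
      have h1 : algebraMap ℤ_[3] R9 (a ^ 3 - a) = algebraMap ℤ_[3] R9 (3 * c) :=
        congrArg _ hc
      rw [map_sub, map_pow, map_mul, map_ofNat] at h1
      linear_combination h1
    have hDD : (algebraMap ℤ_[3] R9 b) ^ 3 - algebraMap ℤ_[3] R9 b
        - 3 * algebraMap ℤ_[3] R9 d = 0 := by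
      have h1 : algebraMap ℤ_[3] R9 (b ^ 3 - b) = algebraMap ℤ_[3] R9 (3 * d) :=
        congrArg _ hd
      rw [map_sub, map_pow, map_mul, map_ofNat] at h1
      linear_combination h1
    have hab : algebraMap ℤ_[3] R9 (a ^ 2 + b)
        = (algebraMap ℤ_[3] R9 a) ^ 2 + algebraMap ℤ_[3] R9 b := by
      rw [map_add, map_pow]
    rw [hs, hab]
    exact aux_cube ζ _ _ s _ _ hrel hCC hDD
  · intro u hu
    obtain ⟨v, hv⟩ := hu
    exact aux_unit ζ u v hrel hv
end
end

section
/- Let α = u + vζ₃ ∈ Z₃[ζ₃] be a unit with α ≡ 1 (mod √(−3)), where √(−3) = 1 + 2ζ₃. Write α = 1 + 3k + ℓ√(−3) with k, ℓ ∈ Z₃, and assume Norm(α) := α·σ(α) ≡ 1 (mod 9) where σ(ζ₃) = ζ₃². Then ℓ² ≡ k (mod 3), and regarding α in Z₃[ζ₉] with π = 1 − ζ₉, α ≡ (1 + ℓπ − (ℓ+k)π²)³ (mod π⁹), i.e., α is a cube modulo π⁹. -/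
noncomputable section
lemma dvd_of_toZMod_eq_zero (x : ℤ_[3]) (hx : PadicInt.toZMod x = 0) : (3 : ℤ_[3]) ∣ x := by
  have hmem : x ∈ RingHom.ker (PadicInt.toZMod : ℤ_[3] →+* ZMod 3) := hx
  rw [PadicInt.ker_toZMod, PadicInt.maximalIdeal_eq_span_p] at hmem
  have := Ideal.mem_span_singleton.mp hmem
  simpa using this

set_option maxHeartbeats 16000000 in
set_option synthInstance.maxHeartbeats 400000 in
/-- Let α = 1 + 3k + ℓ√(−3) ∈ Z₃[ζ₃] ⊆ Z₃[ζ₉] with √(−3) = 1 + 2ζ₃, ζ₃ = ζ₉³, and suppose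
Norm(α) = (1+3k)² + 3ℓ² ≡ 1 (mod 9). Then ℓ² ≡ k (mod 3) and
α ≡ (1 + ℓπ − (ℓ+k)π²)³ (mod π⁹), i.e. α is a cube mod π⁹ (π = 1 − ζ₉). -/
theorem stmt_18 (ζ : R9) (h : IsPrimitiveRoot ζ 9) (k l : ℤ_[3])
    (hnorm : (9 : ℤ_[3]) ∣ ((1 + 3 * k) ^ 2 + 3 * l ^ 2 - 1)) :
    (3 : ℤ_[3]) ∣ (l ^ 2 - k) ∧
    (1 - ζ) ^ 9 ∣
      ((1 + 3 * algebraMap ℤ_[3] R9 k + algebraMap ℤ_[3] R9 l * (1 + 2 * ζ ^ 3))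
        - (1 + algebraMap ℤ_[3] R9 l * (1 - ζ)
            - algebraMap ℤ_[3] R9 (l + k) * (1 - ζ) ^ 2) ^ 3) := by
  obtain ⟨c, hc⟩ := hnorm
  -- l² = k + 3m
  have hm : l ^ 2 = k + 3 * (c - k - k ^ 2) := by
    have h3 : (3 : ℤ_[3]) * (l ^ 2) = 3 * (k + 3 * (c - k - k ^ 2)) := by linear_combination hc
    exact mul_left_cancel₀ (by norm_num) h3
  set m : ℤ_[3] := c - k - k ^ 2 with hmdef
  -- k*l = l + 3j
  have hjd : (3 : ℤ_[3]) ∣ (k * l - l) := by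
    apply dvd_of_toZMod_eq_zero
    have hz2 : (PadicInt.toZMod l) ^ 2 = PadicInt.toZMod k := by
      have := congrArg (PadicInt.toZMod : ℤ_[3] →+* ZMod 3) hm
      simp only [map_add, map_mul, map_pow, map_ofNat] at this
      rw [show ((3 : ZMod 3)) = 0 by decide, zero_mul, add_zero] at this
      exact this
    have key : ∀ a b : ZMod 3, b ^ 2 = a → a * b - b = 0 := by decide
    rw [map_sub, map_mul]
    exact key _ _ hz2
  obtain ⟨j, hj⟩ := hjd
  have hJ : k * l = l + 3 * j := by linear_combination hj
  -- k³ = k + 3t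
  have htd : (3 : ℤ_[3]) ∣ (k ^ 3 - k) := by
    apply dvd_of_toZMod_eq_zero
    have key : ∀ a : ZMod 3, a ^ 3 - a = 0 := by decide
    rw [map_sub, map_pow]
    exact key _
  obtain ⟨t, ht⟩ := htd
  have hT : k ^ 3 = k + 3 * t := by linear_combination ht
  refine ⟨⟨m, by linear_combination hm⟩, ?_⟩
  -- relation ζ⁶ + ζ³ + 1 = 0
  have h9 : ζ ^ 9 = 1 := h.pow_eq_one
  have h3ne : ζ ^ 3 ≠ 1 := h.pow_ne_one_of_pos_of_lt (by norm_num) (by norm_num)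
  have hrel : ζ ^ 6 + ζ ^ 3 + 1 = 0 := by
    have hfac : (ζ ^ 3 - 1) * (ζ ^ 6 + ζ ^ 3 + 1) = 0 := by linear_combination h9
    have hfacK : (((ζ : K9)) ^ 3 - 1) * (((ζ : K9)) ^ 6 + ((ζ : K9)) ^ 3 + 1) = 0 := by
      have := congrArg (Subalgebra.val _) hfac
      push_cast at this
      exact this
    rcases mul_eq_zero.mp hfacK with h' | h'
    · exfalso
      apply h3ne
      apply Subtype.coe_injective
      push_cast
      linear_combination h'
    · apply Subtype.coe_injective
      push_cast
      linear_combination h'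
  -- map everything to R9
  set f := algebraMap ℤ_[3] R9 with hf
  set A := f k with hA
  set B := f l with hB
  set M := f m with hM
  set J := f j with hJ9
  set T := f t with hT9
  have hBr : B ^ 2 = A + 3 * M := by
    have := congrArg f hm
    simp only [map_add, map_mul, map_pow, map_ofNat] at this
    exact this
  have hJr : A * B = B + 3 * J := by
    have := congrArg f hJ
    simp only [map_add, map_mul, map_ofNat] at this
    exact this
  have hTr : A ^ 3 = A + 3 * T := by
    have := congrArg f hT
    simp only [map_add, map_mul, map_pow, map_ofNat] at this
    exact this
  have hlk : f (l + k) = B + A := by rw [map_add]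
  rw [hlk]
  refine ⟨((181*B + (-6)*T + 346*J + 75*M + (-8)*M*B + (-66)*A + 54*A*J + 90*A*M + 42*A^2) + ((-237)*B + (-6)*T + (-861)*J + 93*M + 87*M*B + 165*A + (-198)*A*J + (-156)*A*M + (-126)*A^2)*(1-ζ) + (90*B + 24*T + 990*J + (-345)*M + (-156)*M*B + (-188)*A + 282*A*J + 123*A*M + 164*A^2)*(1-ζ)^2 + (72*B + (-28)*T + (-627)*J + 387*M + 138*M*B + 117*A + (-219)*A*J + (-39)*A*M + (-118)*A^2)*(1-ζ)^3 + ((-77)*B + 15*T + 208*J + (-198)*M + (-62)*M*B + (-38)*A + 90*A*J + (-3)*A*M + 45*A^2)*(1-ζ)^4 + (19*B + (-3)*T + (-28)*J + 38*M + 11*M*B + 5*A + (-15)*A*J + 3*A*M + (-7)*A^2)*(1-ζ)^5), ?_⟩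
  linear_combination
    ((B + A) + (3*A)*(1-ζ) + ((-3)*B + (-3)*M + 3*A)*(1-ζ)^2 + ((-1)*B + 5*J + (-3)*M + (-1)*M*B)*(1-ζ)^3 + (9*B + 12*J + 6*M + (-3)*A + 3*A*M)*(1-ζ)^4 + (12*B + 15*M + 3*M*B + (-1)*A + (-3)*A*J + 3*A*M + (-2)*A^2)*(1-ζ)^5 + ((-9)*B + T + (-33)*J + 3*M + 3*M*B + 6*A + (-6)*A*J + (-6)*A*M + (-5)*A^2)*(1-ζ)^6 + ((-37)*B + 3*T + (-40)*J + (-30)*M + (-4)*M*B + 8*A + (-15)*A*M + (-3)*A^2)*(1-ζ)^7 + ((-19)*B + 3*T + 28*J + (-38)*M + (-11)*M*B + (-5)*A + 15*A*J + (-3)*A*M + 7*A^2)*(1-ζ)^8) * hrel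
    + (((-3))*(1-ζ)^2 + (6 + (-1)*B)*(1-ζ)^3 + ((-3) + 3*B + 3*A)*(1-ζ)^4 + ((-3)*B + (-6)*A)*(1-ζ)^5 + (B + 3*A)*(1-ζ)^6) * hBr
    + ((5)*(1-ζ)^3 + ((-3))*(1-ζ)^4 + ((-6) + (-3)*A)*(1-ζ)^5 + (4 + 3*A)*(1-ζ)^6) * hJr
    + ((1)*(1-ζ)^6) * hTr
end
end
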